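/- Let f(U) = L U + N⁽²⁾(U) + N⁽³⁾(U) − b with L ∈ ℝⁿˣⁿ, b ∈ ℝⁿ, and N⁽²⁾, N⁽³⁾ : ℝⁿ → ℝⁿ differentiable and homogeneous of degrees 2 and 3. For U ∈ ℝⁿ with all entries nonzero, set w = 2 N⁽²⁾(U) + 3 N⁽³⁾(U), vᵢ = 1/(n Uᵢ), and define the pseudo-Jacobian matrix J̃(U) = L + w vᵀ. Then J̃(U) U = (Df(U))(U), i.e., the pseudo-Jacobian matrix agrees with the true Jacobian matrix of f in its action on the vector U. -/

import Mathlib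

lemma euler_hom {n : ℕ} (m : ℕ) (N : (Fin n → ℝ) → (Fin n → ℝ))
    (hdiff : Differentiable ℝ N)
    (hhom : ∀ (t : ℝ) (U : Fin n → ℝ), N (t • U) = t ^ m • N U)
    (U : Fin n → ℝ) : (fderiv ℝ N U) U = (m : ℝ) • N U := by
  have h1 : HasDerivAt (fun t : ℝ => N (t • U)) ((fderiv ℝ N U) U) 1 := by
    have hs : HasDerivAt (fun t : ℝ => t • U) U 1 := by
      simpa using (hasDerivAt_id (1:ℝ)).smul_const U
    have := (hdiff ((1:ℝ) • U)).hasFDerivAt.comp_hasDerivAt 1 hs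
    rw [one_smul] at this
    exact this
  have h2 : HasDerivAt (fun t : ℝ => N (t • U)) ((m : ℝ) • N U) 1 := by
    have : HasDerivAt (fun t : ℝ => t ^ m • N U)
        (((m : ℝ) * (1:ℝ) ^ (m - 1)) • N U) 1 := by
      simpa using (hasDerivAt_pow m (1:ℝ)).smul_const (N U)
    simp only [one_pow, mul_one] at this
    exact this.congr_of_eventuallyEq (Filter.Eventually.of_forall fun t => by simp [hhom t U])
  exact h1.unique h2

/-- The pseudo-Jacobian matrix `J̃(U) = L + w vᵀ`, with
`w = 2 N² U + 3 N³ U` and `v i = 1 / (n * U i)`, agrees with the true Jacobian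
of `f U = L U + N² U + N³ U − b` in its action on `U`. -/
theorem pseudo_newton_stmt3 (n : ℕ) (hn : 0 < n)
    (L : Matrix (Fin n) (Fin n) ℝ) (b : Fin n → ℝ)
    (N2 N3 : (Fin n → ℝ) → (Fin n → ℝ))
    (hdiff2 : Differentiable ℝ N2) (hdiff3 : Differentiable ℝ N3)
    (hhom2 : ∀ (t : ℝ) (U : Fin n → ℝ), N2 (t • U) = t ^ 2 • N2 U)
    (hhom3 : ∀ (t : ℝ) (U : Fin n → ℝ), N3 (t • U) = t ^ 3 • N3 U)
    (f : (Fin n → ℝ) → (Fin n → ℝ))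
    (hf : f = fun U => L.mulVec U + N2 U + N3 U - b)
    (U : Fin n → ℝ) (hU : ∀ i, U i ≠ 0)
    (w v : Fin n → ℝ)
    (hw : w = (2 : ℝ) • N2 U + (3 : ℝ) • N3 U)
    (hv : ∀ i, v i = 1 / (n * U i)) :
    (L + Matrix.vecMulVec w v).mulVec U = (fderiv ℝ f U) U := by
  have hA : HasFDerivAt (fun x => L.mulVec x)
      (LinearMap.toContinuousLinearMap L.mulVecLin) U := by
    simpa using (LinearMap.toContinuousLinearMap L.mulVecLin).hasFDerivAt
  have hF : HasFDerivAt f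
      (LinearMap.toContinuousLinearMap L.mulVecLin + fderiv ℝ N2 U + fderiv ℝ N3 U) U := by
    rw [hf]
    exact ((hA.add (hdiff2 U).hasFDerivAt).add (hdiff3 U).hasFDerivAt).sub_const b
  rw [hF.fderiv]
  have e2 := euler_hom 2 N2 hdiff2 hhom2 U
  have e3 := euler_hom 3 N3 hdiff3 hhom3 U
  have hdot : dotProduct v U = 1 := by
    have : ∀ i, v i * U i = (1 : ℝ) / n := by
      intro i
      rw [hv i]
      field_simp [hU i]
    simp only [dotProduct, this]
    rw [Finset.sum_const, Finset.card_univ, Fintype.card_fin, nsmul_eq_mul]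
    field_simp [hn.ne']
  have hvm : (Matrix.vecMulVec w v).mulVec U = w := by
    funext i
    simp only [Matrix.mulVec, Matrix.vecMulVec, Matrix.of_apply, dotProduct,
      mul_assoc, ← Finset.mul_sum]
    rw [show ∑ j, v j * U j = (1:ℝ) from hdot, mul_one]
  rw [Matrix.add_mulVec, hvm]
  simp only [ContinuousLinearMap.add_apply, e2, e3, hw,
    LinearMap.coe_toContinuousLinearMap', Matrix.mulVecLin_apply]
  norm_num
  abel
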